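/- For every L̄ > 0 there exists a constant c₁ > 0 such that for all ℓ ∈ (0, L̄] one has 8π · ∫_{−X(ℓ)}^{X(ℓ)} ρ_ℓ(s)^{−2} ds ≥ c₁. -/

import Mathlib

open Real MeasureTheory

/-- Half-width (in the coordinate `s`) of the standard hyperbolic collar around a simple
closed geodesic of length `ℓ`. -/
noncomputable def collarX (ℓ : ℝ) : ℝ :=
  (2 * Real.pi / ℓ) * (Real.pi / 2 - Real.arctan (Real.sinh (ℓ / 2)))

/-- Conformal factor of the standard hyperbolic collar metric `ρ_ℓ(s)²(ds² + dθ²)`. -/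
noncomputable def collarRho (ℓ s : ℝ) : ℝ :=
  ℓ / (2 * Real.pi * Real.cos (ℓ * s / (2 * Real.pi)))

/-- Uniform lower bound for the squared L²-norm of dz² on collars around geodesics of
bounded length: for every `L̄ > 0` there is `c₁ > 0` with `8π ∫ ρ_ℓ⁻² ≥ c₁` for
all `ℓ ∈ (0, L̄]`. -/
theorem collar_dz2_L2_lower_bound (Lbar : ℝ) (hL : 0 < Lbar) :
    ∃ c₁ : ℝ, 0 < c₁ ∧ ∀ ℓ : ℝ, ℓ ∈ Set.Ioc 0 Lbar →
      c₁ ≤ 8 * Real.pi * ∫ s in (-collarX ℓ)..(collarX ℓ), (collarRho ℓ s ^ 2)⁻¹ := by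
  have hπ : (0:ℝ) < Real.pi := Real.pi_pos
  set A : ℝ := Real.pi / 2 - Real.arctan (Real.sinh (Lbar / 2)) with hAdef
  have hA0 : 0 < A := sub_pos.mpr (Real.arctan_lt_pi_div_two _)
  refine ⟨8 * Real.pi * ((2 * Real.pi / Lbar) ^ 2 / 2 * ((2 * Real.pi / Lbar) * A)), ?_, ?_⟩
  · have h1 : 0 < 2 * Real.pi / Lbar := by positivity
    positivity
  intro ℓ hℓ
  obtain ⟨hℓ0, hℓL⟩ := hℓ
  set a : ℝ := Real.pi / 2 - Real.arctan (Real.sinh (ℓ / 2)) with hadef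
  have ha0 : 0 < a := sub_pos.mpr (Real.arctan_lt_pi_div_two _)
  have haπ : a < Real.pi / 2 := by
    have hs : 0 < Real.sinh (ℓ / 2) := Real.sinh_pos_iff.mpr (by linarith)
    have : 0 < Real.arctan (Real.sinh (ℓ / 2)) := by
      have := Real.arctan_strictMono hs
      simpa [Real.arctan_zero] using this
    linarith
  have haA : A ≤ a := by
    have : Real.arctan (Real.sinh (ℓ / 2)) ≤ Real.arctan (Real.sinh (Lbar / 2)) :=
      Real.arctan_strictMono.monotone (Real.sinh_le_sinh.mpr (by linarith))
    simp only [hadef, hAdef]; linarith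
  set X : ℝ := collarX ℓ with hXdef
  have hXeq : X = (2 * Real.pi / ℓ) * a := rfl
  have hX0 : 0 < X := by
    rw [hXeq]; positivity
  -- key cosine positivity on the full collar
  have hcos : ∀ s : ℝ, |s| ≤ X → 0 < Real.cos (ℓ * s / (2 * Real.pi)) := by
    intro s hs
    have habs : |ℓ * s / (2 * Real.pi)| ≤ a := by
      rw [abs_div, abs_mul, abs_of_pos hℓ0, abs_of_pos (by positivity : (0:ℝ) < 2 * Real.pi)]
      rw [div_le_iff₀ (by positivity)]
      calc ℓ * |s| ≤ ℓ * X := by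
            exact mul_le_mul_of_nonneg_left hs hℓ0.le
        _ = a * (2 * Real.pi) := by
            rw [hXeq]; field_simp
    have h1 : -(Real.pi / 2) < ℓ * s / (2 * Real.pi) := by
      have := (abs_le.mp habs).1; linarith
    have h2 : ℓ * s / (2 * Real.pi) < Real.pi / 2 := by
      have := (abs_le.mp habs).2; linarith
    exact Real.cos_pos_of_mem_Ioo ⟨h1, h2⟩
  -- continuity / integrability of the integrand on [-X, X]
  have hcont : ContinuousOn (fun s => (collarRho ℓ s ^ 2)⁻¹) (Set.Icc (-X) X) := by
    have hρ : ContinuousOn (fun s => collarRho ℓ s) (Set.Icc (-X) X) := by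
      apply ContinuousOn.div continuousOn_const
      · exact (continuous_const.mul (Real.continuous_cos.comp
          ((continuous_const.mul continuous_id).div_const _))).continuousOn
      · intro s hs
        have := hcos s (abs_le.mpr ⟨hs.1, hs.2⟩)
        positivity
    apply (hρ.pow 2).inv₀
    intro s hs
    have hc := hcos s (abs_le.mpr ⟨hs.1, hs.2⟩)
    have hρpos : 0 < collarRho ℓ s := div_pos hℓ0 (by positivity)
    exact pow_ne_zero 2 hρpos.ne'
  have hint : IntervalIntegrable (fun s => (collarRho ℓ s ^ 2)⁻¹) volume (-X) X := by
    apply ContinuousOn.intervalIntegrable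
    rwa [Set.uIcc_of_le (by linarith : -X ≤ X)]
  -- Step 1 : restrict to the half collar
  have step1 : ∫ s in (-(X/2))..(X/2), (collarRho ℓ s ^ 2)⁻¹
      ≤ ∫ s in (-X)..X, (collarRho ℓ s ^ 2)⁻¹ := by
    apply intervalIntegral.integral_mono_interval (by linarith) (by linarith) (by linarith)
    · filter_upwards with s
      positivity
    · exact hint
  -- Step 2 : pointwise lower bound on the half collar
  set m : ℝ := (2 * Real.pi / ℓ) ^ 2 / 2 with hmdef
  have step2 : m * X ≤ ∫ s in (-(X/2))..(X/2), (collarRho ℓ s ^ 2)⁻¹ := by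
    have hptwise : ∀ s ∈ Set.Icc (-(X/2)) (X/2), m ≤ (collarRho ℓ s ^ 2)⁻¹ := by
      intro s hs
      set u : ℝ := ℓ * s / (2 * Real.pi) with hudef
      have habs : |u| ≤ Real.pi / 4 := by
        have hsX : |s| ≤ X / 2 := abs_le.mpr ⟨by linarith [hs.1], hs.2⟩
        have : |u| ≤ a / 2 := by
          rw [hudef, abs_div, abs_mul, abs_of_pos hℓ0,
            abs_of_pos (by positivity : (0:ℝ) < 2 * Real.pi), div_le_iff₀ (by positivity)]
          calc ℓ * |s| ≤ ℓ * (X / 2) := mul_le_mul_of_nonneg_left hsX hℓ0.le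
            _ = a / 2 * (2 * Real.pi) := by rw [hXeq]; field_simp
        linarith [haπ]
      have hcosge : Real.sqrt 2 / 2 ≤ Real.cos u := by
        have h1 : Real.cos (Real.pi / 4) ≤ Real.cos |u| :=
          Real.cos_le_cos_of_nonneg_of_le_pi (abs_nonneg _)
            (by linarith [Real.pi_pos]) habs
        rwa [Real.cos_abs, Real.cos_pi_div_four] at h1
      have hcospos : 0 < Real.cos u := lt_of_lt_of_le (by positivity) hcosge
      have hρ : collarRho ℓ s = ℓ / (2 * Real.pi * Real.cos u) := rfl
      have hval : (collarRho ℓ s ^ 2)⁻¹ = (2 * Real.pi / ℓ) ^ 2 * Real.cos u ^ 2 := by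
        rw [hρ, ← inv_pow, inv_div]
        field_simp
      rw [hval, hmdef]
      have hsq : (1:ℝ) / 2 ≤ Real.cos u ^ 2 := by
        have := pow_le_pow_left₀ (by positivity : (0:ℝ) ≤ Real.sqrt 2 / 2) hcosge 2
        have h2 : (Real.sqrt 2 / 2) ^ 2 = 1 / 2 := by
          rw [div_pow, Real.sq_sqrt (by norm_num : (0:ℝ) ≤ 2)]; norm_num
        linarith [h2 ▸ this]
      have hpos : (0:ℝ) < (2 * Real.pi / ℓ) ^ 2 := by positivity
      calc (2 * Real.pi / ℓ) ^ 2 / 2 = (2 * Real.pi / ℓ) ^ 2 * (1 / 2) := by ring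
        _ ≤ (2 * Real.pi / ℓ) ^ 2 * Real.cos u ^ 2 :=
            mul_le_mul_of_nonneg_left hsq hpos.le
    have hconst : ∫ _s in (-(X/2))..(X/2), m = m * X := by
      rw [intervalIntegral.integral_const, smul_eq_mul]
      ring
    rw [← hconst]
    apply intervalIntegral.integral_mono_on (by linarith)
      intervalIntegrable_const
      (hint.mono_set (by rw [Set.uIcc_of_le (by linarith : -(X/2) ≤ X/2),
        Set.uIcc_of_le (by linarith : -X ≤ X)]; exact Set.Icc_subset_Icc (by linarith) (by linarith)))
      hptwise
  -- combine
  have hfinal : (2 * Real.pi / Lbar) ^ 2 / 2 * ((2 * Real.pi / Lbar) * A) ≤ m * X := by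
    rw [hmdef, hXeq]
    have h1 : 2 * Real.pi / Lbar ≤ 2 * Real.pi / ℓ :=
      div_le_div_of_nonneg_left (by positivity) hℓ0 hℓL
    have h2 : 0 < 2 * Real.pi / Lbar := by positivity
    gcongr
  have : (2 * Real.pi / Lbar) ^ 2 / 2 * ((2 * Real.pi / Lbar) * A)
      ≤ ∫ s in (-X)..X, (collarRho ℓ s ^ 2)⁻¹ := le_trans hfinal (le_trans step2 step1)
  calc 8 * Real.pi * ((2 * Real.pi / Lbar) ^ 2 / 2 * ((2 * Real.pi / Lbar) * A))
      ≤ 8 * Real.pi * ∫ s in (-X)..X, (collarRho ℓ s ^ 2)⁻¹ :=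
        mul_le_mul_of_nonneg_left this (by positivity)
    _ = 8 * Real.pi * ∫ s in (-collarX ℓ)..(collarX ℓ), (collarRho ℓ s ^ 2)⁻¹ := rfl
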